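/- Let φ : A → B be a surjective continuous unital algebra homomorphism between unital complex Banach algebras. Then the induced continuous group homomorphism Aˣ → Bˣ on groups of invertible elements is a Serre fibration. -/

import Mathlib

/-- A continuous map `f : E → B` is a Serre fibration if it has the homotopy lifting
property with respect to maps from finite-dimensional cubes `[0,1]ᵏ`. -/
def IsSerreFibration {E B : Type*} [TopologicalSpace E] [TopologicalSpace B]
    (f : E → B) : Prop :=
  Continuous f ∧
    ∀ (k : ℕ) (H : ((Fin k → unitInterval) × unitInterval) → B)
      (h : (Fin k → unitInterval) → E),
      Continuous H → Continuous h → (∀ x, f (h x) = H (x, 0)) →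
        ∃ H' : ((Fin k → unitInterval) × unitInterval) → E,
          Continuous H' ∧ (∀ p, f (H' p) = H p) ∧ ∀ x, H' (x, 0) = h x

private lemma abs_min_sub_min_le {a b c : ℝ} : |min a b - min a c| ≤ |b - c| := by
  have key : ∀ b c : ℝ, min a b - min a c ≤ |b - c| := by
    intro b c
    rcases le_total a c with h | h
    · rw [min_eq_left h]
      have h1 := min_le_left a b
      have h2 := abs_nonneg (b - c)
      linarith
    · rw [min_eq_right h]
      have h1 := min_le_right a b
      have h2 := le_abs_self (b - c)
      linarith
  rw [abs_sub_le_iff]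
  exact ⟨key b c, (abs_sub_comm b c) ▸ key c b⟩

private lemma continuous_units_mk {X R : Type*} [TopologicalSpace X]
    [NormedRing R] [CompleteSpace R] {g : X → Rˣ}
    (hg : Continuous fun x => (g x : R)) : Continuous g := by
  rw [Units.continuous_iff]
  refine ⟨hg, ?_⟩
  have h2 : (fun x => (((g x)⁻¹ : Rˣ) : R)) = fun x => Ring.inverse ((g x : R)) := by
    funext x
    rw [Ring.inverse_unit]
  rw [h2]
  refine continuous_iff_continuousAt.2 fun x => ?_
  exact ContinuousAt.comp (x := x) (NormedRing.inverse_continuousAt (g x)) hg.continuousAt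

private lemma approx_lift {X E F : Type*} [TopologicalSpace X] [CompactSpace X]
    [NormedAddCommGroup E] [NormedSpace ℝ E] [NormedAddCommGroup F] [NormedSpace ℝ F]
    (φ : E →L[ℝ] F) {C : ℝ} (hC0 : 0 ≤ C)
    (hpre : ∀ b, ∃ a, φ a = b ∧ ‖a‖ ≤ C * ‖b‖)
    (g : C(X, F)) {δ : ℝ} (hδ : 0 < δ) :
    ∃ ℓ : C(X, E), (∀ x, ‖φ (ℓ x) - g x‖ ≤ δ) ∧ ‖ℓ‖ ≤ C * ‖g‖ := by
  classical
  choose a haφ han using fun y : X => hpre (g y)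
  have hUo : ∀ y : X, IsOpen {x | ‖g x - g y‖ < δ} := fun y =>
    isOpen_lt ((g.continuous.sub continuous_const).norm) continuous_const
  have hUc : (Set.univ : Set X) ⊆ ⋃ y, {x | ‖g x - g y‖ < δ} := fun x _ =>
    Set.mem_iUnion.2 ⟨x, by simpa using hδ⟩
  obtain ⟨t, ht⟩ := isCompact_univ.elim_finite_subcover _ hUo hUc
  set w : X → X → ℝ := fun y x => max (δ - ‖g x - g y‖) 0 with hw
  have hwnn : ∀ y x, 0 ≤ w y x := fun y x => le_max_right _ _
  have hwcont : ∀ y, Continuous (w y) := fun y =>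
    ((continuous_const.sub ((g.continuous.sub continuous_const).norm)).max continuous_const)
  set W : X → ℝ := fun x => ∑ y ∈ t, w y x with hWdef
  have hWc : Continuous W := continuous_finset_sum _ fun y _ => hwcont y
  have hWpos : ∀ x, 0 < W x := by
    intro x
    have hx := ht (Set.mem_univ x)
    simp only [Set.mem_iUnion] at hx
    obtain ⟨y, hyt, hyU⟩ := hx
    refine Finset.sum_pos' (fun y _ => hwnn y x) ⟨y, hyt, ?_⟩
    have hlt : ‖g x - g y‖ < δ := hyU
    exact lt_max_iff.2 (Or.inl (sub_pos.2 hlt))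
  set ℓf : X → E := fun x => (W x)⁻¹ • ∑ y ∈ t, w y x • a y with hℓf
  have hℓc : Continuous ℓf :=
    (hWc.inv₀ fun x => (hWpos x).ne').smul
      (continuous_finset_sum _ fun y _ => (hwcont y).smul continuous_const)
  have keyterm : ∀ x y, ‖w y x • (g y - g x)‖ ≤ w y x * δ := by
    intro x y
    rw [norm_smul, Real.norm_eq_abs, abs_of_nonneg (hwnn y x)]
    rcases eq_or_lt_of_le (hwnn y x) with h | h
    · rw [← h]; simp
    · have hxy : ‖g x - g y‖ < δ := by
        by_contra hge
        push_neg at hge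
        have h0 : w y x = 0 := max_eq_right (by linarith)
        rw [h0] at h; exact lt_irrefl 0 h
      have hyx : ‖g y - g x‖ ≤ δ := by rw [norm_sub_rev]; linarith
      exact mul_le_mul_of_nonneg_left hyx (hwnn y x)
  have hbound : ∀ x, ‖φ (ℓf x) - g x‖ ≤ δ := by
    intro x
    have h1 : φ (ℓf x) = (W x)⁻¹ • ∑ y ∈ t, w y x • φ (a y) := by
      simp [hℓf, map_smul, map_sum]
    have hsum : ∑ y ∈ t, w y x • (g y - g x)
        = (∑ y ∈ t, w y x • φ (a y)) - W x • g x := by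
      simp only [smul_sub, Finset.sum_sub_distrib, haφ, hWdef, Finset.sum_smul]
    have h3 : φ (ℓf x) - g x = (W x)⁻¹ • ∑ y ∈ t, w y x • (g y - g x) := by
      rw [hsum, smul_sub, ← h1, smul_smul, inv_mul_cancel₀ (hWpos x).ne', one_smul]
    rw [h3, norm_smul, Real.norm_eq_abs, abs_of_nonneg (inv_nonneg.2 (hWpos x).le)]
    have hsn : ‖∑ y ∈ t, w y x • (g y - g x)‖ ≤ W x * δ := by
      refine (norm_sum_le _ _).trans ?_
      simp only [hWdef, Finset.sum_mul]
      exact Finset.sum_le_sum fun y _ => keyterm x y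
    calc (W x)⁻¹ * ‖∑ y ∈ t, w y x • (g y - g x)‖ ≤ (W x)⁻¹ * (W x * δ) :=
          mul_le_mul_of_nonneg_left hsn (inv_nonneg.2 (hWpos x).le)
      _ = δ := by rw [← mul_assoc, inv_mul_cancel₀ (hWpos x).ne', one_mul]
  have hbound2 : ∀ x, ‖ℓf x‖ ≤ C * ‖g‖ := by
    intro x
    have hterm : ∀ y ∈ t, ‖w y x • a y‖ ≤ w y x * (C * ‖g‖) := by
      intro y _
      rw [norm_smul, Real.norm_eq_abs, abs_of_nonneg (hwnn y x)]
      refine mul_le_mul_of_nonneg_left ((han y).trans ?_) (hwnn y x)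
      exact mul_le_mul_of_nonneg_left (g.norm_coe_le_norm y) hC0
    have hsn : ‖∑ y ∈ t, w y x • a y‖ ≤ W x * (C * ‖g‖) := by
      refine (norm_sum_le _ _).trans ?_
      simp only [hWdef, Finset.sum_mul]
      exact Finset.sum_le_sum hterm
    have heq : ‖ℓf x‖ = (W x)⁻¹ * ‖∑ y ∈ t, w y x • a y‖ := by
      simp only [hℓf, norm_smul, Real.norm_eq_abs, abs_of_nonneg (inv_nonneg.2 (hWpos x).le)]
    rw [heq]
    calc (W x)⁻¹ * ‖∑ y ∈ t, w y x • a y‖ ≤ (W x)⁻¹ * (W x * (C * ‖g‖)) :=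
          mul_le_mul_of_nonneg_left hsn (inv_nonneg.2 (hWpos x).le)
      _ = C * ‖g‖ := by rw [← mul_assoc, inv_mul_cancel₀ (hWpos x).ne', one_mul]
  exact ⟨⟨ℓf, hℓc⟩, hbound, (ContinuousMap.norm_le _ (mul_nonneg hC0 (norm_nonneg g))).2 hbound2⟩

private lemma exact_lift {X E F : Type*} [TopologicalSpace X] [CompactSpace X]
    [NormedAddCommGroup E] [NormedSpace ℝ E] [CompleteSpace E]
    [NormedAddCommGroup F] [NormedSpace ℝ F]
    (φ : E →L[ℝ] F) {C : ℝ} (hC0 : 0 ≤ C)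
    (hpre : ∀ b, ∃ a, φ a = b ∧ ‖a‖ ≤ C * ‖b‖)
    (g : C(X, F)) :
    ∃ ℓ : C(X, E), (∀ x, φ (ℓ x) = g x) ∧ ‖ℓ‖ ≤ 2 * C * ‖g‖ := by
  classical
  rcases eq_or_lt_of_le (norm_nonneg g) with hg0 | hgpos
  · have hg : g = 0 := by rwa [eq_comm, norm_eq_zero] at hg0
    refine ⟨0, fun x => ?_, ?_⟩
    · simp [hg]
    · simp [norm_zero, ← hg0]
  · have hδ : ∀ n : ℕ, 0 < ‖g‖ / 2 ^ (n + 1) := fun n => by positivity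
    let Φ : C(X, E) → C(X, F) := fun ℓ => ⟨fun x => φ (ℓ x), φ.continuous.comp ℓ.continuous⟩
    let r : ℕ → C(X, F) := fun n =>
      Nat.rec g (fun n p => p - Φ (approx_lift φ hC0 hpre p (hδ n)).choose) n
    let L : ℕ → C(X, E) := fun n => (approx_lift φ hC0 hpre (r n) (hδ n)).choose
    have hr : ∀ n, r (n + 1) = r n - Φ (L n) := fun n => rfl
    have hspec : ∀ n, (∀ x, ‖φ (L n x) - r n x‖ ≤ ‖g‖ / 2 ^ (n + 1)) ∧ ‖L n‖ ≤ C * ‖r n‖ :=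
      fun n => (approx_lift φ hC0 hpre (r n) (hδ n)).choose_spec
    have hrnorm : ∀ n, ‖r n‖ ≤ ‖g‖ / 2 ^ n := by
      intro n
      induction n with
      | zero =>
        show ‖g‖ ≤ ‖g‖ / 2 ^ 0
        norm_num
      | succ n _ =>
        rw [hr n]
        refine (ContinuousMap.norm_le _ (hδ n).le).2 fun x => ?_
        rw [ContinuousMap.sub_apply, norm_sub_rev]
        exact (hspec n).1 x
    have hLnorm : ∀ n, ‖L n‖ ≤ C * ‖g‖ * (1 / 2) ^ n := by
      intro n
      refine (hspec n).2.trans ?_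
      calc C * ‖r n‖ ≤ C * (‖g‖ / 2 ^ n) := mul_le_mul_of_nonneg_left (hrnorm n) hC0
        _ = C * ‖g‖ * (1 / 2) ^ n := by ring_nf; norm_num
    have hgeo : Summable fun n : ℕ => C * ‖g‖ * (1 / 2) ^ n :=
      (summable_geometric_of_lt_one (by norm_num) (by norm_num)).mul_left (C * ‖g‖)
    have hLsummable : Summable L :=
      Summable.of_norm_bounded hgeo hLnorm
    obtain ⟨ℓ, hℓ⟩ := hLsummable
    have hnorms : Summable fun n => ‖L n‖ :=
      Summable.of_nonneg_of_le (fun n => norm_nonneg _) hLnorm hgeo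
    refine ⟨ℓ, ?_, ?_⟩
    · intro x
      have h1 : HasSum (fun n => L n x) (ℓ x) := by
        have := hℓ.mapL (ContinuousMap.evalCLM ℝ x)
        simpa using this
      have h2 : HasSum (fun n => φ (L n x)) (φ (ℓ x)) := h1.mapL φ
      have h3 := h2.tendsto_sum_nat
      have htel : ∀ N : ℕ, ∑ n ∈ Finset.range N, φ (L n x) = g x - r N x := by
        intro N
        induction N with
        | zero => simp [r]
        | succ N ih =>
          rw [Finset.sum_range_succ, ih, hr N, ContinuousMap.sub_apply]
          have : Φ (L N) x = φ (L N x) := rfl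
          rw [this]
          abel
      have h0 : Filter.Tendsto (fun N => r N x) Filter.atTop (nhds 0) := by
        have hbnd : ∀ N : ℕ, ‖(r N) x‖ ≤ ‖g‖ * (1 / 2) ^ N := fun N =>
          ((r N).norm_coe_le_norm x).trans ((hrnorm N).trans (le_of_eq (by ring_nf; norm_num)))
        have hten : Filter.Tendsto (fun N : ℕ => ‖g‖ * (1 / 2) ^ N) Filter.atTop (nhds 0) := by
          have := (tendsto_pow_atTop_nhds_zero_of_lt_one (by norm_num : (0:ℝ) ≤ 1/2)
            (by norm_num)).const_mul ‖g‖
          simpa using this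
        exact squeeze_zero_norm hbnd hten
      have h4 : Filter.Tendsto (fun N => ∑ n ∈ Finset.range N, φ (L n x))
          Filter.atTop (nhds (g x)) := by
        simp only [htel]
        simpa using Filter.Tendsto.sub (tendsto_const_nhds (x := g x)) h0
      exact tendsto_nhds_unique h3 h4
    · have h5 : ‖ℓ‖ ≤ ∑' n, ‖L n‖ := by
        rw [← hℓ.tsum_eq]
        exact norm_tsum_le_tsum_norm hnorms
      have h6 : ∑' n, ‖L n‖ ≤ ∑' n : ℕ, C * ‖g‖ * (1 / 2) ^ n :=
        Summable.tsum_le_tsum hLnorm hnorms hgeo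
      have h7 : ∑' n : ℕ, C * ‖g‖ * (1 / 2) ^ n = C * ‖g‖ * 2 := by
        rw [tsum_mul_left, tsum_geometric_of_lt_one (by norm_num) (by norm_num)]
        norm_num
      calc ‖ℓ‖ ≤ ∑' n, ‖L n‖ := h5
        _ ≤ C * ‖g‖ * 2 := h7 ▸ h6
        _ = 2 * C * ‖g‖ := by ring

/-- **Invertibles of a Banach algebra quotient.** If `φ : A → B` is a surjective
continuous unital algebra homomorphism of unital complex Banach algebras, then the
induced map `Aˣ → Bˣ` on groups of invertible elements is a Serre fibration. -/
theorem units_map_of_surjective_isSerreFibration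
    {A B : Type*} [NormedRing A] [NormedAlgebra ℂ A] [CompleteSpace A]
    [NormedRing B] [NormedAlgebra ℂ B] [CompleteSpace B]
    (φ : A →ₐ[ℂ] B) (hφ : Continuous φ) (hsurj : Function.Surjective φ) :
    IsSerreFibration (fun u : Aˣ => Units.map φ.toRingHom.toMonoidHom u) := by
  classical
  constructor
  · exact continuous_units_mk (hφ.comp Units.continuous_val)
  intro k H h hH hh hh0
  -- the continuous linear map underlying φ, with controlled preimages
  let φL : A →L[ℂ] B := { toLinearMap := φ.toLinearMap, cont := hφ }
  obtain ⟨C, hCpos, hpre⟩ := φL.exists_preimage_norm_le (fun b => hsurj b)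
  let φR : A →L[ℝ] B := φL.restrictScalars ℝ
  have hpreR : ∀ b, ∃ a, φR a = b ∧ ‖a‖ ≤ C * ‖b‖ := fun b => by
    obtain ⟨a, h1, h2⟩ := hpre b
    exact ⟨a, h1, h2⟩
  set ε : ℝ := 1 / (8 * C + 1) with hεdef
  have h8C : (0:ℝ) < 8 * C + 1 := by linarith
  have hεpos : 0 < ε := by positivity
  have hkey : 4 * C * ε ≤ 1 / 2 := by
    rw [hεdef, mul_one_div, div_le_div_iff₀ h8C (by norm_num)]
    linarith
  -- uniform continuity: nearby time parameters give near-one ratios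
  obtain ⟨d, hdpos, hunif⟩ :
      ∃ d > 0, ∀ (x : Fin k → unitInterval) (s t : unitInterval),
        |(t : ℝ) - (s : ℝ)| ≤ d →
        ‖((H (x, t) : B) * (((H (x, s))⁻¹ : Bˣ) : B)) - 1‖ ≤ ε := by
    set F : ((Fin k → unitInterval) × unitInterval × unitInterval) → ℝ :=
      fun y => ‖((H (y.1, y.2.2) : B) * (((H (y.1, y.2.1))⁻¹ : Bˣ) : B)) - 1‖ with hF
    have hm1 : Continuous fun y : (Fin k → unitInterval) × unitInterval × unitInterval =>
        ((y.1, y.2.2) : (Fin k → unitInterval) × unitInterval) :=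
      continuous_fst.prodMk (continuous_snd.comp continuous_snd)
    have hm0 : Continuous fun y : (Fin k → unitInterval) × unitInterval × unitInterval =>
        ((y.1, y.2.1) : (Fin k → unitInterval) × unitInterval) :=
      continuous_fst.prodMk (continuous_fst.comp continuous_snd)
    have hFc : Continuous F := by
      apply Continuous.norm
      apply Continuous.sub _ continuous_const
      exact (Units.continuous_val.comp (hH.comp hm1)).mul
        (Units.continuous_coe_inv.comp (hH.comp hm0))
    by_cases hS : {y | ε ≤ F y}.Nonempty
    · have hSc : IsCompact {y | ε ≤ F y} :=
        (isClosed_le continuous_const hFc).isCompact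
      have hGc : Continuous fun y : (Fin k → unitInterval) × unitInterval × unitInterval =>
          |((y.2.2 : unitInterval) : ℝ) - ((y.2.1 : unitInterval) : ℝ)| :=
        ((continuous_subtype_val.comp (continuous_snd.comp continuous_snd)).sub
          (continuous_subtype_val.comp (continuous_fst.comp continuous_snd))).abs
      obtain ⟨y₀, hy₀S, hy₀min⟩ := hSc.exists_isMinOn hS hGc.continuousOn
      set d₀ : ℝ := |((y₀.2.2 : unitInterval) : ℝ) - ((y₀.2.1 : unitInterval) : ℝ)| with hd₀
      have hd₀pos : 0 < d₀ := by
        rcases eq_or_lt_of_le (abs_nonneg (((y₀.2.2 : unitInterval) : ℝ) - y₀.2.1)) with h | h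
        · exfalso
          have heq : ((y₀.2.2 : unitInterval) : ℝ) = ((y₀.2.1 : unitInterval) : ℝ) := by
            have := h.symm
            rw [abs_eq_zero] at this
            linarith [this]
          have heq2 : (y₀.2.2 : unitInterval) = y₀.2.1 := Subtype.ext heq
          have hF0 : F y₀ = 0 := by
            rw [hF]
            simp only [heq2]
            rw [← Units.val_mul, mul_inv_cancel, Units.val_one, sub_self, norm_zero]
          have := hy₀S
          rw [Set.mem_setOf_eq, hF0] at this
          linarith
        · exact h
      refine ⟨d₀ / 2, by linarith, ?_⟩
      intro x s t habs
      by_contra hgt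
      push_neg at hgt
      have hyS : (x, s, t) ∈ {y | ε ≤ F y} := le_of_lt hgt
      have := (isMinOn_iff.1 hy₀min) _ hyS
      rw [← hd₀] at this
      simp only at this
      linarith [habs, this]
    · refine ⟨1, one_pos, fun x s t _ => ?_⟩
      by_contra hc
      push_neg at hc
      exact hS ⟨(x, s, t), le_of_lt hc⟩
  -- subdivision
  obtain ⟨n, hn⟩ := exists_nat_gt (1 / d)
  have hnpos : (0:ℝ) < n := lt_trans (by positivity) hn
  have h1n : 1 / (n:ℝ) ≤ d := by
    rw [div_le_iff₀ hnpos]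
    have := (div_lt_iff₀ hdpos).1 hn
    nlinarith
  have hsmem : ∀ j : ℕ, min ((j:ℝ)/n) 1 ∈ Set.Icc (0:ℝ) 1 := fun j =>
    ⟨le_min (div_nonneg (Nat.cast_nonneg j) hnpos.le) zero_le_one, min_le_right _ _⟩
  set sj : ℕ → unitInterval := fun j => ⟨min ((j:ℝ)/n) 1, hsmem j⟩ with hsj
  set τ : ℕ → unitInterval → unitInterval := fun j t =>
    ⟨min (t:ℝ) ((sj j : unitInterval) : ℝ),
      ⟨le_min t.2.1 (sj j).2.1, (min_le_left _ _).trans t.2.2⟩⟩ with hτ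
  have hτc : ∀ j, Continuous (τ j) := fun j =>
    Continuous.subtype_mk (continuous_subtype_val.min continuous_const) _
  have hτzero : ∀ j, τ j 0 = 0 := by
    intro j
    apply Subtype.ext
    show min ((0 : unitInterval) : ℝ) _ = ((0 : unitInterval) : ℝ)
    rw [show ((0 : unitInterval) : ℝ) = 0 from rfl]
    exact min_eq_left (sj j).2.1
  have hτstart : ∀ t, τ 0 t = 0 := by
    intro t
    apply Subtype.ext
    show min (t : ℝ) ((sj 0 : unitInterval) : ℝ) = ((0 : unitInterval) : ℝ)
    have h0 : ((sj 0 : unitInterval) : ℝ) = 0 := by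
      simp [hsj]
    rw [h0, show ((0 : unitInterval) : ℝ) = 0 from rfl]
    exact min_eq_right t.2.1
  have hτlast : ∀ t, τ n t = t := by
    intro t
    apply Subtype.ext
    show min (t : ℝ) ((sj n : unitInterval) : ℝ) = (t : ℝ)
    have h1 : ((sj n : unitInterval) : ℝ) = 1 := by
      simp [hsj, div_self hnpos.ne']
    rw [h1]
    exact min_eq_left t.2.2
  have hτidem : ∀ j t, τ j (τ j t) = τ j t := by
    intro j t
    apply Subtype.ext
    show min (min (t:ℝ) ((sj j : unitInterval) : ℝ)) ((sj j : unitInterval) : ℝ)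
      = min (t:ℝ) ((sj j : unitInterval) : ℝ)
    rw [min_assoc, min_self]
  have hsmono : ∀ j : ℕ, ((sj j : unitInterval) : ℝ) ≤ ((sj (j+1) : unitInterval) : ℝ) := by
    intro j
    show min ((j:ℝ)/n) 1 ≤ min (((j+1:ℕ):ℝ)/n) 1
    refine min_le_min ?_ le_rfl
    apply div_le_div_of_nonneg_right ?_ hnpos.le
    exact_mod_cast Nat.le_succ j
  have hτsucc : ∀ j t, τ (j+1) (τ j t) = τ j t := by
    intro j t
    apply Subtype.ext
    show min (min (t:ℝ) ((sj j : unitInterval) : ℝ)) ((sj (j+1) : unitInterval) : ℝ)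
      = min (t:ℝ) ((sj j : unitInterval) : ℝ)
    rw [min_assoc, min_eq_left (hsmono j)]
  have hsdiff : ∀ j : ℕ, |((sj (j+1) : unitInterval) : ℝ) - ((sj j : unitInterval) : ℝ)| ≤ 1 / n := by
    intro j
    have e1 : ((sj (j+1) : unitInterval) : ℝ) = min 1 (((j+1:ℕ):ℝ)/n) := by
      rw [min_comm]
    have e2 : ((sj j : unitInterval) : ℝ) = min 1 ((j:ℝ)/n) := by
      rw [min_comm]
    rw [e1, e2]
    refine (abs_min_sub_min_le).trans ?_
    have : (((j+1:ℕ):ℝ)/n) - ((j:ℝ)/n) = 1 / n := by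
      push_cast
      ring
    rw [show |(((j+1:ℕ):ℝ)/n) - ((j:ℝ)/n)| = 1/n from by rw [this]; exact abs_of_nonneg (by positivity)]
  have hτdiff : ∀ j (t : unitInterval), |((τ (j+1) t : unitInterval) : ℝ) - ((τ j t : unitInterval) : ℝ)| ≤ d := by
    intro j t
    have : |((τ (j+1) t : unitInterval) : ℝ) - ((τ j t : unitInterval) : ℝ)|
        ≤ |((sj (j+1) : unitInterval) : ℝ) - ((sj j : unitInterval) : ℝ)| := abs_min_sub_min_le
    exact this.trans ((hsdiff j).trans h1n)
  -- main induction on strips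
  have main : ∀ j : ℕ, ∃ L : ((Fin k → unitInterval) × unitInterval) → Aˣ,
      Continuous L ∧
      (∀ p, Units.map φ.toRingHom.toMonoidHom (L p) = H (p.1, τ j p.2)) ∧
      (∀ x, L (x, 0) = h x) := by
    intro j
    induction j with
    | zero =>
      refine ⟨fun p => h p.1, hh.comp continuous_fst, fun p => ?_, fun x => rfl⟩
      rw [hτstart p.2]
      exact hh0 p.1
    | succ j ih =>
      obtain ⟨L, hLc, hLφ, hL0⟩ := ih
      have hm1 : Continuous fun p : (Fin k → unitInterval) × unitInterval =>
          ((p.1, τ (j+1) p.2) : (Fin k → unitInterval) × unitInterval) :=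
        continuous_fst.prodMk ((hτc (j+1)).comp continuous_snd)
      have hm0 : Continuous fun p : (Fin k → unitInterval) × unitInterval =>
          ((p.1, τ j p.2) : (Fin k → unitInterval) × unitInterval) :=
        continuous_fst.prodMk ((hτc j).comp continuous_snd)
      set cf : ((Fin k → unitInterval) × unitInterval) → B := fun p =>
        ((H (p.1, τ (j+1) p.2) : B) * (((H (p.1, τ j p.2))⁻¹ : Bˣ) : B)) - 1 with hcf
      have hcfc : Continuous cf :=
        ((Units.continuous_val.comp (hH.comp hm1)).mul
          (Units.continuous_coe_inv.comp (hH.comp hm0))).sub continuous_const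
      set c : C((Fin k → unitInterval) × unitInterval, B) := ⟨cf, hcfc⟩ with hc
      have hcnorm : ‖c‖ ≤ ε :=
        (ContinuousMap.norm_le _ hεpos.le).2 fun p =>
          hunif p.1 (τ j p.2) (τ (j+1) p.2) (hτdiff j p.2)
      obtain ⟨ℓ, hℓφ, hℓn⟩ := exact_lift φR hCpos.le hpreR c
      have hℓφ' : ∀ p, φ (ℓ p) = cf p := fun p => hℓφ p
      have hℓbound : ∀ p, ‖ℓ p‖ ≤ 2 * C * ε := fun p =>
        (ℓ.norm_coe_le_norm p).trans (hℓn.trans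
          (mul_le_mul_of_nonneg_left hcnorm (by positivity)))
      set a' : ((Fin k → unitInterval) × unitInterval) → A := fun p =>
        ℓ p - ℓ (p.1, τ j p.2) with ha'
      have ha'c : Continuous a' :=
        ℓ.continuous.sub (ℓ.continuous.comp hm0)
      have ha'small : ∀ p, ‖a' p‖ ≤ 1 / 2 := by
        intro p
        refine (norm_sub_le _ _).trans ?_
        have h1 := hℓbound p
        have h2 := hℓbound (p.1, τ j p.2)
        linarith [hkey]
      have hφa' : ∀ p, φ (a' p) = cf p := by
        intro p
        have h0 : cf (p.1, τ j p.2) = 0 := by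
          rw [hcf]
          simp only
          rw [hτsucc j p.2, hτidem j p.2, ← Units.val_mul, mul_inv_cancel,
            Units.val_one, sub_self]
        calc φ (a' p) = φ (ℓ p) - φ (ℓ (p.1, τ j p.2)) := map_sub φ _ _
          _ = cf p - cf (p.1, τ j p.2) := by rw [hℓφ' p, hℓφ' (p.1, τ j p.2)]
          _ = cf p := by rw [h0, sub_zero]
      set v : ((Fin k → unitInterval) × unitInterval) → Aˣ := fun p =>
        Units.oneSub (-(a' p)) (by
          rw [norm_neg]
          exact lt_of_le_of_lt (ha'small p) (by norm_num)) with hv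
      have hv_val : ∀ p, ((v p : Aˣ) : A) = 1 + a' p := fun p => by
        rw [hv]
        simp only [Units.val_oneSub, sub_neg_eq_add]
      have hvcont : Continuous v := by
        apply continuous_units_mk
        have he : (fun p => ((v p : Aˣ) : A)) = fun p => 1 + a' p := funext hv_val
        rw [he]
        exact continuous_const.add ha'c
      refine ⟨fun p => v p * L p, hvcont.mul hLc, ?_, ?_⟩
      · intro p
        have hmapv : Units.map φ.toRingHom.toMonoidHom (v p)
            = H (p.1, τ (j+1) p.2) * (H (p.1, τ j p.2))⁻¹ := by
          apply Units.ext
          show φ ((v p : Aˣ) : A) = _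
          rw [hv_val, map_add, map_one, hφa' p, Units.val_mul, hcf]
          simp only
          abel
        rw [map_mul, hmapv, hLφ p]
        exact inv_mul_cancel_right _ _
      · intro x
        have ha0 : a' (x, 0) = 0 := by
          rw [ha']
          simp only
          rw [hτzero j]
          exact sub_self _
        have hv1 : v (x, 0) = 1 := by
          apply Units.ext
          rw [hv_val, ha0, add_zero, Units.val_one]
        show v (x, 0) * L (x, 0) = h x
        rw [hv1, one_mul, hL0 x]
  obtain ⟨L, hLc, hLφ, hL0⟩ := main n
  refine ⟨L, hLc, fun p => ?_, hL0⟩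
  show Units.map φ.toRingHom.toMonoidHom (L p) = H p
  rw [hLφ p, hτlast p.2]
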